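/- Let A be a real symmetric positive semidefinite n×n matrix and γ > 0. Then the matrix M := (1/4)·(I + sqrt(I + 4γ⁻¹ A))² is symmetric positive definite and satisfies M - sqrt(M) = γ⁻¹ A, where sqrt denotes the unique positive semidefinite square root. -/

import Mathlib

open scoped Matrix

/-- The positive semidefinite square root of a positive semidefinite matrix
(the definition `Matrix.PosSemidef.sqrt` of the older Mathlib, since removed). -/
noncomputable def Matrix.PosSemidef.sqrt {n 𝕜 : Type*} [Fintype n] [DecidableEq n] [RCLike 𝕜]
    [PartialOrder 𝕜] {A : Matrix n n 𝕜} (hA : A.PosSemidef) : Matrix n n 𝕜 :=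
  hA.1.eigenvectorUnitary.1 * Matrix.diagonal ((↑) ∘ (√·) ∘ hA.1.eigenvalues) *
    (star hA.1.eigenvectorUnitary : Matrix n n 𝕜)

section SqrtAux
open scoped MatrixOrder

theorem Matrix.PosSemidef.sqrt_eq_cfcSqrt {m : ℕ} {A : Matrix (Fin m) (Fin m) ℝ}
    (hA : A.PosSemidef) : hA.sqrt = CFC.sqrt A := by
  rw [CFC.sqrt_eq_cfc, cfc_nnreal_eq_real _ A, hA.1.cfc_eq]
  simp [Matrix.IsHermitian.cfc, Matrix.PosSemidef.sqrt, Unitary.conjStarAlgAut_apply,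
    Function.comp_def, max_eq_left (hA.eigenvalues_nonneg _)]

theorem Matrix.PosSemidef.posSemidef_sqrt {m : ℕ} {A : Matrix (Fin m) (Fin m) ℝ}
    (hA : A.PosSemidef) : hA.sqrt.PosSemidef := by
  rw [hA.sqrt_eq_cfcSqrt]
  exact Matrix.nonneg_iff_posSemidef.mp (CFC.sqrt_nonneg A)

theorem Matrix.PosSemidef.sq_sqrt {m : ℕ} {A : Matrix (Fin m) (Fin m) ℝ}
    (hA : A.PosSemidef) : hA.sqrt ^ 2 = A := by
  rw [hA.sqrt_eq_cfcSqrt]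
  exact CFC.sq_sqrt A (Matrix.nonneg_iff_posSemidef.mpr hA)

theorem Matrix.PosSemidef.eq_sqrt_of_sq_eq {m : ℕ} {B A : Matrix (Fin m) (Fin m) ℝ}
    (hB : B.PosSemidef) (hA : A.PosSemidef) (h : B ^ 2 = A) : B = hA.sqrt := by
  rw [hA.sqrt_eq_cfcSqrt]
  exact (CFC.sqrt_unique (by rw [← sq]; exact h) (Matrix.nonneg_iff_posSemidef.mpr hB)).symm

end SqrtAux

theorem matrix_kkt_sqrt_identity {n : ℕ} (A : Matrix (Fin n) (Fin n) ℝ) (γ : ℝ)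
    (hγ : 0 < γ) (hA : A.PosSemidef)
    (hB : ((1 : Matrix (Fin n) (Fin n) ℝ) + (4 * γ⁻¹) • A).PosSemidef) :
    ((1/4 : ℝ) • ((1 + hB.sqrt)^2)).PosDef ∧
    ∀ hM : ((1/4 : ℝ) • ((1 + hB.sqrt)^2)).PosSemidef,
      (1/4 : ℝ) • ((1 + hB.sqrt)^2) - hM.sqrt = γ⁻¹ • A := by
  have hstar : ∀ v : Fin n → ℝ, star v = v := fun v => funext fun i => star_trivial _
  set S := hB.sqrt with hSdef
  have hSps : S.PosSemidef := hB.posSemidef_sqrt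
  have hSsq : S ^ 2 = 1 + (4 * γ⁻¹) • A := hB.sq_sqrt
  have hT : (1 + S).PosDef := Matrix.PosDef.add_posSemidef Matrix.PosDef.one hSps
  set U : Matrix (Fin n) (Fin n) ℝ := (1/2 : ℝ) • (1 + S) with hUdef
  have hUherm : U.IsHermitian := by
    have h := hT.isHermitian
    unfold Matrix.IsHermitian at h ⊢
    rw [hUdef, Matrix.conjTranspose_smul, h]
    norm_num
  have hUpd : U.PosDef := by
    refine Matrix.PosDef.of_dotProduct_mulVec_pos hUherm fun x hx => ?_
    have h1 := hT.dotProduct_mulVec_pos hx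
    rw [hUdef, Matrix.smul_mulVec, dotProduct_smul]
    positivity
  have hUsq : U ^ 2 = (1/4 : ℝ) • ((1 + S) ^ 2) := by
    rw [hUdef, smul_pow]
    norm_num
  have hMpd : ((1/4 : ℝ) • ((1 + S) ^ 2)).PosDef := by
    rw [← hUsq]
    refine Matrix.PosDef.of_dotProduct_mulVec_pos (hUherm.pow 2) fun x hx => ?_
    have hUx : U *ᵥ x ≠ 0 := by
      intro h
      have h2 := hUpd.dotProduct_mulVec_pos hx
      rw [h, dotProduct_zero] at h2
      exact lt_irrefl 0 h2
    have key : star x ⬝ᵥ (U ^ 2) *ᵥ x = (U *ᵥ x) ⬝ᵥ (U *ᵥ x) := by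
      rw [pow_two, ← Matrix.mulVec_mulVec, Matrix.dotProduct_mulVec]
      congr 1
      rw [← Matrix.mulVec_transpose, hstar]
      have h := hUherm
      rw [Matrix.IsHermitian, Matrix.conjTranspose_eq_transpose_of_trivial] at h
      rw [h]
    rw [key]
    have h3 := Matrix.dotProduct_self_star_pos_iff.mpr hUx
    rwa [hstar] at h3
  refine ⟨hMpd, fun hM => ?_⟩
  have hsqrt : U = hM.sqrt := hUpd.posSemidef.eq_sqrt_of_sq_eq hM hUsq
  rw [← hsqrt, ← hUsq, hUdef]
  have expand : ((1/2 : ℝ) • (1 + S)) ^ 2 - (1/2 : ℝ) • (1 + S)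
      = (1/4 : ℝ) • (S ^ 2 - 1) := by
    have h1 : (1 + S) ^ 2 = 1 + S + S + S ^ 2 := by noncomm_ring
    rw [smul_pow, h1]
    module
  rw [expand, hSsq]
  rw [add_sub_cancel_left, smul_smul]
  congr 1
  field_simp
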